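/- As t → 0 from the right, Σ_{k=0}^∞ (k+1)²·e^{−kt} − ( 2·t^{−3} + 2·t^{−2} + t^{−1} ) = O(1). In particular, the first three Steklov heat invariants of the unit ball in ℝ⁴ are a₀ = 2, a₁ = 2, a₂ = 1. -/

import Mathlib

open Real Asymptotics Filter

private lemma heat_hasSum {t : ℝ} (ht0 : 0 < t) :
    HasSum (fun k : ℕ => ((k : ℝ) + 1) ^ 2 * Real.exp (-(k : ℝ) * t))
      (2 * (1 / (1 - Real.exp (-t)) ^ 3) - 1 / (1 - Real.exp (-t)) ^ 2) := by
  have hr : ‖Real.exp (-t)‖ < 1 := by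
    rw [Real.norm_eq_abs, abs_of_pos (Real.exp_pos _)]
    exact Real.exp_lt_one_iff.2 (by linarith)
  have h2 := hasSum_choose_mul_geometric_of_norm_lt_one (𝕜 := ℝ) 2 hr
  have h1 := hasSum_choose_mul_geometric_of_norm_lt_one (𝕜 := ℝ) 1 hr
  have h := (h2.mul_left 2).sub h1
  refine h.congr_fun (fun k => ?_)
  have hnat : 2 * ((k + 2).choose 2) = (k + 2) * (k + 1) := by
    rw [Nat.choose_two_right]
    have hd : 2 ∣ (k + 2) * (k + 2 - 1) := by
      have h := (Nat.even_mul_succ_self (k + 1)).two_dvd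
      have e : k + 2 - 1 = k + 1 := rfl
      rw [e, mul_comm]
      exact h
    rw [Nat.mul_div_cancel' hd]
    congr 1
  have hcast : 2 * (((k + 2).choose 2 : ℕ) : ℝ) = ((k : ℝ) + 2) * ((k : ℝ) + 1) := by
    exact_mod_cast congrArg (Nat.cast : ℕ → ℝ) hnat
  have hexp : Real.exp (-(k : ℝ) * t) = Real.exp (-t) ^ k := by
    rw [show (-(k : ℝ) * t) = (k : ℝ) * (-t) by ring, Real.exp_nat_mul]
  rw [hexp, Nat.choose_one_right]
  push_cast
  linear_combination (-(Real.exp (-t) ^ k)) * hcast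

set_option maxHeartbeats 1000000 in
private lemma heat_main_bound {t : ℝ} (ht0 : 0 < t) (ht1 : t < 1) :
    |2 * (1 / (1 - Real.exp (-t)) ^ 3) - 1 / (1 - Real.exp (-t)) ^ 2
      - (2 / t ^ 3 + 2 / t ^ 2 + 1 / t)| ≤ 16 := by
  obtain ⟨u, hu⟩ : ∃ u : ℝ, 1 - Real.exp (-t) = u := ⟨_, rfl⟩
  obtain ⟨v, hv⟩ : ∃ v : ℝ, t - t ^ 2 / 2 + t ^ 3 / 6 = v := ⟨_, rfl⟩
  rw [hu]
  have hexpb := Real.exp_bound (x := -t) (by rw [abs_of_nonpos (by linarith)]; linarith)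
      (n := 4) (by norm_num)
  have he : |u - v| ≤ 5 / 96 * t ^ 4 := by
    have hsum : ∑ m ∈ Finset.range 4, (-t) ^ m / (m.factorial : ℝ)
        = 1 - t + t ^ 2 / 2 - t ^ 3 / 6 := by
      simp [Finset.sum_range_succ, Nat.factorial]
      ring
    rw [hsum] at hexpb
    have habs : |(-t)| = t := by rw [abs_of_nonpos (by linarith)]; ring
    rw [habs] at hexpb
    have hvv : u - v = -(Real.exp (-t) - (1 - t + t ^ 2 / 2 - t ^ 3 / 6)) := by
      rw [← hu, ← hv]; ring
    rw [hvv, abs_neg]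
    calc |Real.exp (-t) - (1 - t + t ^ 2 / 2 - t ^ 3 / 6)|
        ≤ t ^ 4 * ((4 : ℕ).succ / ((4 : ℕ).factorial * (4 : ℕ))) := hexpb
      _ = 5 / 96 * t ^ 4 := by norm_num [Nat.factorial]; ring
  obtain ⟨he1, he2⟩ := abs_le.mp he
  have hp2 : t ^ 2 ≤ 1 := pow_le_one₀ ht0.le ht1.le
  have hp3 : t ^ 3 ≤ 1 := pow_le_one₀ ht0.le ht1.le
  have hp4 : t ^ 4 ≤ 1 := pow_le_one₀ ht0.le ht1.le
  have hp5 : t ^ 5 ≤ 1 := pow_le_one₀ ht0.le ht1.le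
  have hn2 : (0:ℝ) ≤ t ^ 2 := by positivity
  have hn3 : (0:ℝ) ≤ t ^ 3 := by positivity
  have hn4 : (0:ℝ) ≤ t ^ 4 := by positivity
  have hn5 : (0:ℝ) ≤ t ^ 5 := by positivity
  have hut : u ≤ t := by
    have := Real.add_one_le_exp (-t)
    rw [← hu]; linarith
  have hvval0 : 0 ≤ v := by rw [← hv]; nlinarith
  have hvt : v ≤ t := by rw [← hv]; nlinarith
  have hu2 : t / 2 ≤ u := by
    rw [← hv] at he1
    nlinarith
  have hu0 : 0 < u := by linarith
  have hA : |2 * t ^ 3 - t ^ 3 * v - (2 + 2 * t + t ^ 2) * v ^ 3| ≤ t ^ 6 := by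
    have hq : 2 * t ^ 3 - t ^ 3 * v - (2 + 2 * t + t ^ 2) * v ^ 3
        = t ^ 6 * (1 / 12 - 5 / 12 * t + 7 / 24 * t ^ 2 - 29 / 216 * t ^ 3
            + 7 / 216 * t ^ 4 - 1 / 216 * t ^ 5) := by
      rw [← hv]; ring
    rw [hq, abs_mul, abs_of_nonneg (by positivity : (0:ℝ) ≤ t ^ 6)]
    have hQ : |1 / 12 - 5 / 12 * t + 7 / 24 * t ^ 2 - 29 / 216 * t ^ 3
        + 7 / 216 * t ^ 4 - 1 / 216 * t ^ 5| ≤ 1 := by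
      rw [abs_le]
      constructor <;> linarith
    nlinarith [pow_nonneg ht0.le 6]
  have hD : |u ^ 3 - v ^ 3| ≤ 5 / 96 * t ^ 4 * (3 * t ^ 2) := by
    have hq : u ^ 3 - v ^ 3 = (u - v) * (u ^ 2 + u * v + v ^ 2) := by ring
    rw [hq, abs_mul]
    have h2 : |u ^ 2 + u * v + v ^ 2| ≤ 3 * t ^ 2 := by
      rw [abs_of_nonneg (by positivity)]
      nlinarith
    exact mul_le_mul he h2 (abs_nonneg _) (by positivity)
  have ht3 : (0:ℝ) < t ^ 3 := by positivity
  have hune : u ≠ 0 := hu0.ne'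
  have htne : t ≠ 0 := ht0.ne'
  have hkey : 2 * (1 / u ^ 3) - 1 / u ^ 2 - (2 / t ^ 3 + 2 / t ^ 2 + 1 / t)
      = (2 * t ^ 3 - t ^ 3 * u - (2 + 2 * t + t ^ 2) * u ^ 3) / (t ^ 3 * u ^ 3) := by
    field_simp
  rw [hkey, abs_div, abs_of_pos (by positivity : (0:ℝ) < t ^ 3 * u ^ 3),
    div_le_iff₀ (by positivity)]
  have habs : |2 * t ^ 3 - t ^ 3 * u - (2 + 2 * t + t ^ 2) * u ^ 3|
      ≤ |2 * t ^ 3 - t ^ 3 * v - (2 + 2 * t + t ^ 2) * v ^ 3|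
        + t ^ 3 * |u - v| + (2 + 2 * t + t ^ 2) * |u ^ 3 - v ^ 3| := by
    have hid : 2 * t ^ 3 - t ^ 3 * u - (2 + 2 * t + t ^ 2) * u ^ 3
        = (2 * t ^ 3 - t ^ 3 * v - (2 + 2 * t + t ^ 2) * v ^ 3)
          + (t ^ 3 * -(u - v) + (2 + 2 * t + t ^ 2) * -(u ^ 3 - v ^ 3)) := by ring
    rw [hid]
    calc |2 * t ^ 3 - t ^ 3 * v - (2 + 2 * t + t ^ 2) * v ^ 3
          + (t ^ 3 * -(u - v) + (2 + 2 * t + t ^ 2) * -(u ^ 3 - v ^ 3))|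
        ≤ |2 * t ^ 3 - t ^ 3 * v - (2 + 2 * t + t ^ 2) * v ^ 3|
          + |t ^ 3 * -(u - v) + (2 + 2 * t + t ^ 2) * -(u ^ 3 - v ^ 3)| := abs_add_le _ _
      _ ≤ |2 * t ^ 3 - t ^ 3 * v - (2 + 2 * t + t ^ 2) * v ^ 3|
          + (|t ^ 3 * -(u - v)| + |(2 + 2 * t + t ^ 2) * -(u ^ 3 - v ^ 3)|) :=
          add_le_add_right (abs_add_le _ _) _
      _ = |2 * t ^ 3 - t ^ 3 * v - (2 + 2 * t + t ^ 2) * v ^ 3|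
          + t ^ 3 * |u - v| + (2 + 2 * t + t ^ 2) * |u ^ 3 - v ^ 3| := by
          rw [abs_mul, abs_mul, abs_neg, abs_neg,
            abs_of_nonneg (by positivity : (0:ℝ) ≤ t ^ 3),
            abs_of_nonneg (by nlinarith : (0:ℝ) ≤ 2 + 2 * t + t ^ 2)]
          ring
  have hb1 : t ^ 3 * |u - v| ≤ 5 / 96 * t ^ 6 := by
    have h := mul_le_mul_of_nonneg_left he ht3.le
    nlinarith [pow_le_pow_of_le_one ht0.le ht1.le (by norm_num : 6 ≤ 7)]
  have hb2 : (2 + 2 * t + t ^ 2) * |u ^ 3 - v ^ 3| ≤ 75 / 96 * t ^ 6 := by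
    have h0 := mul_le_mul_of_nonneg_left hD (by nlinarith : (0:ℝ) ≤ 2 + 2 * t + t ^ 2)
    have h7 := pow_le_pow_of_le_one ht0.le ht1.le (by norm_num : 6 ≤ 7)
    have h8 := pow_le_pow_of_le_one ht0.le ht1.le (by norm_num : 6 ≤ 8)
    nlinarith
  have hN : |2 * t ^ 3 - t ^ 3 * u - (2 + 2 * t + t ^ 2) * u ^ 3| ≤ 2 * t ^ 6 := by
    have ht6 : (0:ℝ) ≤ t ^ 6 := by positivity
    linarith
  have hcube : (t / 2) ^ 3 ≤ u ^ 3 := pow_le_pow_left₀ (by positivity) hu2 3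
  nlinarith [hN, mul_le_mul_of_nonneg_left hcube ht3.le]

/-- Heat trace asymptotics for the unit ball in `ℝ⁴`: as `t → 0⁺`,
`Σ_{k=0}^∞ (k+1)² e^{-kt} = 2t⁻³ + 2t⁻² + t⁻¹ + O(1)`, giving the Steklov heat invariants
`a₀ = 2`, `a₁ = 2`, `a₂ = 1`. -/
theorem heat_trace_ball_four_asymptotics :
    (fun t : ℝ => (∑' k : ℕ, ((k : ℝ) + 1) ^ 2 * Real.exp (-(k : ℝ) * t))
        - (2 / t ^ 3 + 2 / t ^ 2 + 1 / t))
      =O[nhdsWithin (0 : ℝ) (Set.Ioi 0)] fun _ => (1 : ℝ) := by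
  rw [isBigO_iff]
  refine ⟨16, ?_⟩
  filter_upwards [Ioo_mem_nhdsGT_of_mem (show (0:ℝ) ∈ Set.Ico 0 1 by norm_num)] with t ht
  obtain ⟨ht0, ht1⟩ := ht
  rw [(heat_hasSum ht0).tsum_eq]
  simp only [norm_one, mul_one, Real.norm_eq_abs]
  exact heat_main_bound ht0 ht1
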